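/- Let N ≥ 1 and let L ∈ ℂ^{N×N} be a complex matrix such that for every nonzero U ∈ ℂ^N and every index i with |U_i| = max_{1≤j≤N} |U_j|, one has Re( conj(U_i)·(LU)_i ) < 0. Then for every real λ > 0 and every nonzero U ∈ ℂ^N, ‖(λI − L)U‖_∞ > λ·‖U‖_∞; in particular, the matrix λI − L is invertible for every λ > 0. -/

import Mathlib

theorem resolvent_contraction (N : ℕ) (hN : 1 ≤ N) (L : Matrix (Fin N) (Fin N) ℂ)
    (hL : ∀ U : Fin N → ℂ, U ≠ 0 → ∀ i : Fin N,
      (∀ j : Fin N, ‖U j‖ ≤ ‖U i‖) →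
        ((starRingEnd ℂ) (U i) * L.mulVec U i).re < 0) :
    (∀ lam : ℝ, 0 < lam → ∀ U : Fin N → ℂ, U ≠ 0 →
        lam * (⨆ j : Fin N, ‖U j‖) <
          ⨆ j : Fin N, ‖((lam : ℂ) • (1 : Matrix (Fin N) (Fin N) ℂ) - L).mulVec U j‖)
      ∧ ∀ lam : ℝ, 0 < lam →
        IsUnit ((lam : ℂ) • (1 : Matrix (Fin N) (Fin N) ℂ) - L) := by
  have hne : Nonempty (Fin N) := ⟨⟨0, hN⟩⟩
  have key : ∀ lam : ℝ, 0 < lam → ∀ U : Fin N → ℂ, U ≠ 0 →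
      lam * (⨆ j : Fin N, ‖U j‖) <
        ⨆ j : Fin N, ‖((lam : ℂ) • (1 : Matrix (Fin N) (Fin N) ℂ) - L).mulVec U j‖ := by
    intro lam hlam U hU
    obtain ⟨i, hi⟩ := Finite.exists_max (fun j => ‖U j‖)
    have hbdd : BddAbove (Set.range fun j => ‖U j‖) :=
      (Set.finite_range _).bddAbove
    have hbdd2 : BddAbove (Set.range fun j =>
        ‖((lam : ℂ) • (1 : Matrix (Fin N) (Fin N) ℂ) - L).mulVec U j‖) :=
      (Set.finite_range _).bddAbove
    have hsup : (⨆ j : Fin N, ‖U j‖) = ‖U i‖ :=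
      le_antisymm (ciSup_le hi) (le_ciSup hbdd i)
    have hUi : U i ≠ 0 := by
      intro h
      apply hU
      funext j
      have := hi j
      rw [h] at this
      simp only [norm_zero] at this
      exact norm_eq_zero.mp (le_antisymm this (norm_nonneg _))
    have habs : 0 < ‖U i‖ := by
      simpa [norm_pos_iff] using hUi
    have hre := hL U hU i hi
    set a := U i with ha
    set c := L.mulVec U i with hc
    have hmv : ((lam : ℂ) • (1 : Matrix (Fin N) (Fin N) ℂ) - L).mulVec U i
        = (lam : ℂ) * a - c := by
      simp [Matrix.sub_mulVec, Matrix.smul_mulVec, Matrix.one_mulVec, ha, hc,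
        Pi.smul_apply, smul_eq_mul]
    -- Re(conj a * (lam a - c)) = lam * |a|^2 - Re(conj a * c)
    have hre2 : ((starRingEnd ℂ) a * ((lam : ℂ) * a - c)).re
        = lam * (‖a‖)^2 - ((starRingEnd ℂ) a * c).re := by
      have : (starRingEnd ℂ) a * ((lam : ℂ) * a - c)
          = (lam : ℂ) * ((starRingEnd ℂ) a * a) - (starRingEnd ℂ) a * c := by ring
      rw [this]
      simp only [Complex.sub_re, Complex.mul_re, Complex.mul_im, Complex.conj_re,
        Complex.conj_im, Complex.ofReal_re, Complex.ofReal_im, Complex.sq_norm,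
        Complex.normSq_apply]
      ring
    have hle : ((starRingEnd ℂ) a * ((lam : ℂ) * a - c)).re
        ≤ ‖a‖ * ‖(lam : ℂ) * a - c‖ := by
      calc ((starRingEnd ℂ) a * ((lam : ℂ) * a - c)).re
          ≤ ‖(starRingEnd ℂ) a * ((lam : ℂ) * a - c)‖ := Complex.re_le_norm _
        _ = ‖a‖ * ‖(lam : ℂ) * a - c‖ := by
            rw [norm_mul, Complex.norm_conj]
    have hgt : lam * ‖a‖ < ‖(lam : ℂ) * a - c‖ := by
      have h1 : lam * (‖a‖)^2 < ‖a‖ * ‖(lam : ℂ) * a - c‖ := by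
        nlinarith [hre, hre2, hle]
      have h2 : ‖a‖ * (lam * ‖a‖)
          < ‖a‖ * ‖(lam : ℂ) * a - c‖ := by nlinarith
      exact (mul_lt_mul_iff_right₀ habs).mp h2
    calc lam * (⨆ j : Fin N, ‖U j‖) = lam * ‖a‖ := by rw [hsup]
      _ < ‖(lam : ℂ) * a - c‖ := hgt
      _ = ‖((lam : ℂ) • (1 : Matrix (Fin N) (Fin N) ℂ) - L).mulVec U i‖ := by
          rw [hmv]
      _ ≤ _ := le_ciSup hbdd2 i
  refine ⟨key, ?_⟩
  intro lam hlam
  rw [Matrix.isUnit_iff_isUnit_det, isUnit_iff_ne_zero]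
  intro hdet
  obtain ⟨v, hv, hmv⟩ := (Matrix.exists_mulVec_eq_zero_iff).mpr hdet
  have := key lam hlam v hv
  rw [hmv] at this
  simp at this
  have hpos : 0 < ⨆ j : Fin N, ‖v j‖ := by
    obtain ⟨j, hj⟩ : ∃ j, v j ≠ 0 := by
      by_contra h
      push_neg at h
      exact hv (funext h)
    have : 0 < ‖v j‖ := by simpa [norm_pos_iff] using hj
    exact lt_of_lt_of_le this (le_ciSup (f := fun j => ‖v j‖) (Set.finite_range _).bddAbove j)
  nlinarith
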